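/- arXiv:1502.06079 — 3 statements merged into one kernel-verified Lean document; each statement's English description precedes it below -/
import Mathlib

section
/- Let Q, c1 be axis-aligned cubes in ℝ³ such that c1 intersects Q but does not contain any corner of Q and does not intersect any edge of Q, and the side length of c1 is at most that of Q. Then either c1 ⊆ Q or c1 intersects exactly one face of Q. -/
/-- The vertices (corner points) of the axis-aligned box `∏ i, [a i, b i]` in `ℝ³`. -/
def boxVerts (a b : Fin 3 → ℝ) : Set (Fin 3 → ℝ) := {v | ∀ i, v i = a i ∨ v i = b i}

/-- `e` is an edge of the axis-aligned box `∏ i, [a i, b i]`. -/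
def IsBoxEdge (a b : Fin 3 → ℝ) (e : Set (Fin 3 → ℝ)) : Prop :=
  ∃ i : Fin 3, ∃ c : Fin 3 → ℝ, (∀ j, j ≠ i → c j = a j ∨ c j = b j) ∧
    e = {x | x i ∈ Set.Icc (a i) (b i) ∧ ∀ j, j ≠ i → x j = c j}

/-- `f` is a face of the axis-aligned box `∏ i, [a i, b i]`. -/
def IsBoxFace (a b : Fin 3 → ℝ) (f : Set (Fin 3 → ℝ)) : Prop :=
  ∃ i : Fin 3, ∃ t : ℝ, (t = a i ∨ t = b i) ∧
    f = {x | x i = t ∧ ∀ j, j ≠ i → x j ∈ Set.Icc (a j) (b j)}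

lemma third3 : ∀ j k : Fin 3, j ≠ k → ∃ i : Fin 3, i ≠ j ∧ i ≠ k := by decide

lemma other3 : ∀ m i j k : Fin 3, i ≠ j → i ≠ k → j ≠ k → m ≠ i → m = j ∨ m = k := by decide


/-- Let `Q` and `c1` be axis-aligned cubes in `ℝ³` with `side(c1) ≤ side(Q)`,
such that `c1` intersects `Q`, contains no corner of `Q`, and intersects no edge of `Q`.
Then either `c1 ⊆ Q` or `c1` intersects exactly one face of `Q`. -/
theorem stmt4 (q a : Fin 3 → ℝ) (sQ s : ℝ) (hs : 0 < s) (hsQ : s ≤ sQ)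
    (Q c1 : Set (Fin 3 → ℝ))
    (hQ : Q = Set.Icc q (fun i => q i + sQ))
    (hc1 : c1 = Set.Icc a (fun i => a i + s))
    (hmeet : (c1 ∩ Q).Nonempty)
    (hcorner : ∀ v ∈ boxVerts q (fun i => q i + sQ), v ∉ c1)
    (hedge : ∀ e, IsBoxEdge q (fun i => q i + sQ) e → c1 ∩ e = ∅) :
    c1 ⊆ Q ∨ ∃! f, IsBoxFace q (fun i => q i + sQ) f ∧ (c1 ∩ f).Nonempty := by
  subst hQ hc1
  obtain ⟨x0, hx1, hx2⟩ := hmeet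
  rw [Set.mem_Icc] at hx1 hx2
  have hA1 : ∀ m, a m ≤ x0 m := fun m => hx1.1 m
  have hA2 : ∀ m, x0 m ≤ a m + s := fun m => hx1.2 m
  have hB1 : ∀ m, q m ≤ x0 m := fun m => hx2.1 m
  have hB2 : ∀ m, x0 m ≤ q m + sQ := fun m => hx2.2 m
  -- no two distinct coordinates can both have a face-plane of Q crossing c1
  have key : ∀ j k : Fin 3, j ≠ k →
      ∀ tj tk : ℝ, (tj = q j ∨ tj = q j + sQ) → (tk = q k ∨ tk = q k + sQ) →
      a j ≤ tj → tj ≤ a j + s → a k ≤ tk → tk ≤ a k + s → False := by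
    intro j k hjk tj tk htj htk h1 h2 h3 h4
    obtain ⟨i, hij, hik⟩ := third3 j k hjk
    set c : Fin 3 → ℝ := fun m => if m = j then tj else if m = k then tk else 0 with hc
    have hisedge : IsBoxEdge q (fun i => q i + sQ)
        {x | x i ∈ Set.Icc (q i) (q i + sQ) ∧ ∀ m, m ≠ i → x m = c m} := by
      refine ⟨i, c, ?_, rfl⟩
      intro m hmi
      rcases other3 m i j k hij hik hjk hmi with rfl | rfl
      · simpa [hc] using htj
      · simp only [hc]
        rcases eq_or_ne m j with rfl | hmj
        · simpa using htj
        · simpa [hmj] using htk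
    have hempty := hedge _ hisedge
    set x : Fin 3 → ℝ := fun m => if m = j then tj else if m = k then tk else x0 m with hx
    have hxc1 : x ∈ Set.Icc a (fun m => a m + s) := by
      rw [Set.mem_Icc]
      constructor <;> intro m <;> simp only [hx] <;> split_ifs with p1 p2
      · subst p1; exact h1
      · subst p2; exact h3
      · exact hA1 m
      · subst p1; exact h2
      · subst p2; exact h4
      · exact hA2 m
    have hxe : x ∈ {x : Fin 3 → ℝ | x i ∈ Set.Icc (q i) (q i + sQ) ∧ ∀ m, m ≠ i → x m = c m} := by
      constructor
      · have : x i = x0 i := by simp [hx, hij, hik]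
        rw [this]
        exact ⟨hB1 i, hB2 i⟩
      · intro m hmi
        rcases other3 m i j k hij hik hjk hmi with rfl | rfl
        · simp [hx, hc]
        · simp only [hx, hc]
          rcases eq_or_ne m j with rfl | hmj <;> simp [*]
    have : x ∈ (∅ : Set (Fin 3 → ℝ)) := hempty ▸ Set.mem_inter hxc1 hxe
    exact this
  have hPuniq : ∀ j k : Fin 3, j ≠ k →
      ((a j ≤ q j ∧ q j ≤ a j + s) ∨ (a j ≤ q j + sQ ∧ q j + sQ ≤ a j + s)) →
      ((a k ≤ q k ∧ q k ≤ a k + s) ∨ (a k ≤ q k + sQ ∧ q k + sQ ≤ a k + s)) → False := by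
    intro j k hjk hj hk
    rcases hj with ⟨h1, h2⟩ | ⟨h1, h2⟩ <;> rcases hk with ⟨h3, h4⟩ | ⟨h3, h4⟩
    · exact key j k hjk _ _ (Or.inl rfl) (Or.inl rfl) h1 h2 h3 h4
    · exact key j k hjk _ _ (Or.inl rfl) (Or.inr rfl) h1 h2 h3 h4
    · exact key j k hjk _ _ (Or.inr rfl) (Or.inl rfl) h1 h2 h3 h4
    · exact key j k hjk _ _ (Or.inr rfl) (Or.inr rfl) h1 h2 h3 h4
  have hsub : ∀ m : Fin 3,
      ¬((a m ≤ q m ∧ q m ≤ a m + s) ∨ (a m ≤ q m + sQ ∧ q m + sQ ≤ a m + s)) →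
      q m ≤ a m ∧ a m + s ≤ q m + sQ := by
    intro m hm
    push_neg at hm
    obtain ⟨h1, h2⟩ := hm
    constructor
    · by_contra h
      push_neg at h
      have := h1 h.le
      linarith [hB1 m, hA2 m]
    · by_contra h
      push_neg at h
      have := h2 (by linarith [hA1 m, hB2 m])
      linarith
  have faceMeet : ∀ (i : Fin 3) (t : ℝ), a i ≤ t → t ≤ a i + s →
      (Set.Icc a (fun m => a m + s) ∩
        {x : Fin 3 → ℝ | x i = t ∧ ∀ j, j ≠ i → x j ∈ Set.Icc (q j) (q j + sQ)}).Nonempty := by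
    intro i t h1 h2
    refine ⟨Function.update x0 i t, ?_, ?_, ?_⟩
    · rw [Set.mem_Icc]
      constructor <;> intro m <;> rcases eq_or_ne m i with rfl | hm
      · simpa using h1
      · simpa [Function.update_of_ne hm] using hA1 m
      · simpa using h2
      · simpa [Function.update_of_ne hm] using hA2 m
    · simp
    · intro j hj
      simpa [Function.update_of_ne hj] using ⟨hB1 j, hB2 j⟩
  by_cases hP : ∃ i : Fin 3,
      (a i ≤ q i ∧ q i ≤ a i + s) ∨ (a i ≤ q i + sQ ∧ q i + sQ ≤ a i + s)
  · obtain ⟨i, hPi⟩ := hP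
    have huniq : ∀ k : Fin 3,
        ((a k ≤ q k ∧ q k ≤ a k + s) ∨ (a k ≤ q k + sQ ∧ q k + sQ ≤ a k + s)) → k = i := by
      intro k hk
      by_contra hki
      exact hPuniq k i hki hk hPi
    by_cases hL : a i ≤ q i ∧ q i ≤ a i + s
    · by_cases hR : a i ≤ q i + sQ ∧ q i + sQ ≤ a i + s
      · -- both planes cross: c1 = Q in coordinate i, so c1 ⊆ Q
        left
        apply Set.Icc_subset_Icc <;> intro m <;> rcases eq_or_ne m i with rfl | hm
        · linarith [hL.1, hR.2]
        · exact (hsub m (fun h => hm (huniq m h))).1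
        · show a m + s ≤ q m + sQ
          linarith [hL.1, hR.2]
        · exact (hsub m (fun h => hm (huniq m h))).2
      · right
        refine ⟨{x : Fin 3 → ℝ | x i = q i ∧ ∀ j, j ≠ i → x j ∈ Set.Icc (q j) (q j + sQ)},
          ⟨⟨i, q i, Or.inl rfl, rfl⟩, faceMeet i (q i) hL.1 hL.2⟩, ?_⟩
        rintro f ⟨⟨k, t, ht, rfl⟩, ⟨y, hy1, hy2, hy3⟩⟩
        rw [Set.mem_Icc] at hy1
        have hyk : a k ≤ t ∧ t ≤ a k + s := by
          rw [← hy2]; exact ⟨hy1.1 k, hy1.2 k⟩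
        have hki : k = i := by
          apply huniq
          rcases ht with rfl | rfl
          · exact Or.inl hyk
          · exact Or.inr hyk
        subst hki
        rcases ht with rfl | rfl
        · rfl
        · exact absurd hyk hR
    · have hR : a i ≤ q i + sQ ∧ q i + sQ ≤ a i + s := by tauto
      right
      refine ⟨{x : Fin 3 → ℝ | x i = q i + sQ ∧ ∀ j, j ≠ i → x j ∈ Set.Icc (q j) (q j + sQ)},
        ⟨⟨i, q i + sQ, Or.inr rfl, rfl⟩, faceMeet i (q i + sQ) hR.1 hR.2⟩, ?_⟩
      rintro f ⟨⟨k, t, ht, rfl⟩, ⟨y, hy1, hy2, hy3⟩⟩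
      rw [Set.mem_Icc] at hy1
      have hyk : a k ≤ t ∧ t ≤ a k + s := by
        rw [← hy2]; exact ⟨hy1.1 k, hy1.2 k⟩
      have hki : k = i := by
        apply huniq
        rcases ht with rfl | rfl
        · exact Or.inl hyk
        · exact Or.inr hyk
      subst hki
      rcases ht with rfl | rfl
      · exact absurd hyk hL
      · rfl
  · left
    apply Set.Icc_subset_Icc <;> intro m
    · exact (hsub m (fun h => hP ⟨m, h⟩)).1
    · exact (hsub m (fun h => hP ⟨m, h⟩)).2
end

section
/- Let Q and c be axis-aligned cubes in ℝ³ with side length of c at most that of Q. If c intersects two distinct edges of Q, then c contains a corner of Q. -/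
/-- If `Q` and `c` are axis-aligned cubes in `ℝ³` with `side(c) ≤ side(Q)`
and `c` intersects two distinct edges of `Q`, then `c` contains a corner of `Q`. -/
theorem stmt5 (q a : Fin 3 → ℝ) (sQ s : ℝ) (hs : 0 < s) (hsQ : s ≤ sQ)
    (Q c : Set (Fin 3 → ℝ))
    (hQ : Q = Set.Icc q (fun i => q i + sQ))
    (hc : c = Set.Icc a (fun i => a i + s))
    (e1 e2 : Set (Fin 3 → ℝ))
    (he1 : IsBoxEdge q (fun i => q i + sQ) e1) (he2 : IsBoxEdge q (fun i => q i + sQ) e2)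
    (hne : e1 ≠ e2) (hm1 : (c ∩ e1).Nonempty) (hm2 : (c ∩ e2).Nonempty) :
    ∃ v ∈ boxVerts q (fun i => q i + sQ), v ∈ c := by
  obtain ⟨i1, c1, hc1, rfl⟩ := he1
  obtain ⟨i2, c2, hc2, rfl⟩ := he2
  obtain ⟨x, hxc, hxe⟩ := hm1
  obtain ⟨y, hyc, hye⟩ := hm2
  subst hc
  simp only [Set.mem_Icc, Pi.le_def] at hxc hyc
  obtain ⟨hxlo, hxhi⟩ := hxc
  obtain ⟨hylo, hyhi⟩ := hyc
  obtain ⟨hxi, hxj⟩ := hxe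
  obtain ⟨hyi, hyj⟩ := hye
  simp only [Set.mem_Icc] at hxi hyi
  by_cases hii : i1 = i2
  · subst hii
    -- same direction: some fixed coordinate differs
    have hdiff : ∃ j, j ≠ i1 ∧ c1 j ≠ c2 j := by
      by_contra h
      push_neg at h
      apply hne
      ext z
      simp only [Set.mem_setOf_eq]
      constructor
      · rintro ⟨h1, h2⟩
        exact ⟨h1, fun j hj => (h2 j hj).trans (h j hj)⟩
      · rintro ⟨h1, h2⟩
        exact ⟨h1, fun j hj => (h2 j hj).trans (h j hj).symm⟩
    obtain ⟨j, hj, hcne⟩ := hdiff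
    have hxy : x j = c1 j := hxj j hj
    have hyy : y j = c2 j := hyj j hj
    have hsq : sQ ≤ s := by
      rcases hc1 j hj with h1 | h1 <;> rcases hc2 j hj with h2 | h2
      · exact absurd (h1.trans h2.symm) hcne
      · have hx' : x j = q j := by rw [hxy, h1]
        have hy' : y j = q j + sQ := by rw [hyy, h2]
        linarith [hyhi j, hxlo j]
      · have hx' : x j = q j + sQ := by rw [hxy, h1]
        have hy' : y j = q j := by rw [hyy, h2]
        linarith [hxhi j, hylo j]
      · exact absurd (h1.trans h2.symm) hcne
    rcases le_or_gt (a i1) (q i1) with hle | hlt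
    · refine ⟨fun k => if k = i1 then q i1 else x k, ?_, ?_⟩
      · intro k
        rcases eq_or_ne k i1 with rfl | hk
        · simp only [if_pos rfl, eq_self_iff_true, if_true]; left; trivial
        · simp only [if_neg hk]; rw [hxj k hk]; exact hc1 k hk
      · simp only [Set.mem_Icc, Pi.le_def]
        constructor <;> intro k <;> rcases eq_or_ne k i1 with rfl | hk
        · simp only [if_pos rfl, eq_self_iff_true, if_true]; exact hle
        · simp only [if_neg hk]; exact hxlo k
        · simp only [if_pos rfl, eq_self_iff_true, if_true]; linarith [hxi.1, hxhi k]
        · simp only [if_neg hk]; exact hxhi k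
    · refine ⟨fun k => if k = i1 then q i1 + sQ else x k, ?_, ?_⟩
      · intro k
        rcases eq_or_ne k i1 with rfl | hk
        · simp only [if_pos rfl, eq_self_iff_true, if_true]; right; trivial
        · simp only [if_neg hk]; rw [hxj k hk]; exact hc1 k hk
      · simp only [Set.mem_Icc, Pi.le_def]
        constructor <;> intro k <;> rcases eq_or_ne k i1 with rfl | hk
        · simp only [if_pos rfl, eq_self_iff_true, if_true]; linarith [hxlo k, hxi.2]
        · simp only [if_neg hk]; exact hxlo k
        · simp only [if_pos rfl, eq_self_iff_true, if_true]; linarith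
        · simp only [if_neg hk]; exact hxhi k
  · -- different directions
    refine ⟨fun k => if k = i1 then y k else x k, ?_, ?_⟩
    · intro k
      rcases eq_or_ne k i1 with rfl | hk
      · simp only [if_pos rfl, eq_self_iff_true, if_true]
        rw [hyj k hii]
        exact hc2 k hii
      · simp only [if_neg hk]
        rw [hxj k hk]
        exact hc1 k hk
    · simp only [Set.mem_Icc, Pi.le_def]
      constructor <;> intro k <;> rcases eq_or_ne k i1 with rfl | hk
      · simp only [if_pos rfl, eq_self_iff_true, if_true]; exact hylo k
      · simp only [if_neg hk]; exact hxlo k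
      · simp only [if_pos rfl, eq_self_iff_true, if_true]; exact hyhi k
      · simp only [if_neg hk]; exact hxhi k
end

section
/- Let Q be an axis-aligned rectangle and let R be an axis-aligned rectangle such that R ∩ Q ≠ ∅, R contains no corner of Q, and no edge of R has an endpoint in Q. Then R crosses Q completely in one direction: either the two vertical edges of R both cross Q from top to bottom, or the two horizontal edges of R both cross Q from left to right, or Q ⊆ R. -/
/-- Let `Q = [x1,x2]×[y1,y2]` and `R = [a,b]×[c,d]` be axis-aligned rectangles
with `R ∩ Q ≠ ∅`, such that `R` contains no corner of `Q` and no vertex of `R` (endpoint of an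
edge of `R`) lies in `Q`. Then either both vertical edges of `R` cross `Q` from top to bottom,
or both horizontal edges of `R` cross `Q` from left to right, or `Q ⊆ R`. -/
theorem stmt6 (a b c d x1 x2 y1 y2 : ℝ)
    (hab : a < b) (hcd : c < d) (hx : x1 < x2) (hy : y1 < y2)
    (R Q : Set (ℝ × ℝ))
    (hR : R = Set.Icc a b ×ˢ Set.Icc c d)
    (hQ : Q = Set.Icc x1 x2 ×ˢ Set.Icc y1 y2)
    (hne : (R ∩ Q).Nonempty)
    (hcorner : (x1, y1) ∉ R ∧ (x1, y2) ∉ R ∧ (x2, y1) ∉ R ∧ (x2, y2) ∉ R)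
    (hvert : (a, c) ∉ Q ∧ (a, d) ∉ Q ∧ (b, c) ∉ Q ∧ (b, d) ∉ Q) :
    ((x1 ≤ a ∧ a ≤ x2 ∧ c ≤ y1 ∧ y2 ≤ d) ∧ (x1 ≤ b ∧ b ≤ x2 ∧ c ≤ y1 ∧ y2 ≤ d)) ∨
    ((y1 ≤ c ∧ c ≤ y2 ∧ a ≤ x1 ∧ x2 ≤ b) ∧ (y1 ≤ d ∧ d ≤ y2 ∧ a ≤ x1 ∧ x2 ≤ b)) ∨
    Q ⊆ R := by
  obtain ⟨⟨p, q⟩, hpR, hpQ⟩ := hne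
  subst hR hQ
  simp only [Set.mem_prod, Set.mem_Icc, not_and] at hpR hpQ hcorner hvert
  obtain ⟨⟨hpa, hpb⟩, hqc, hqd⟩ := hpR
  obtain ⟨⟨hp1, hp2⟩, hq1, hq2⟩ := hpQ
  have ha2 : a ≤ x2 := hpa.trans hp2
  have hb1 : x1 ≤ b := hp1.trans hpb
  have hc2 : c ≤ y2 := hqc.trans hq2
  have hd1 : y1 ≤ d := hq1.trans hqd
  obtain ⟨hv1, hv2, hv3, hv4⟩ := hvert
  obtain ⟨hk1, hk2, hk3, hk4⟩ := hcorner
  rcases le_or_gt x1 a with h1 | h1 <;> rcases le_or_gt b x2 with h2 | h2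
  · -- x1 ≤ a, b ≤ x2 : vertical edges cross
    have hc1 : c < y1 := by
      by_contra h; push_neg at h
      exact hv1 ⟨h1, ha2⟩ h hc2
    have hd2 : y2 < d := by
      by_contra h; push_neg at h
      exact hv2 ⟨h1, ha2⟩ hd1 h
    exact Or.inl ⟨⟨h1, ha2, hc1.le, hd2.le⟩, ⟨hb1, h2, hc1.le, hd2.le⟩⟩
  · -- x1 ≤ a, x2 < b : contradiction
    have hc1 : c < y1 := by
      by_contra h; push_neg at h
      exact hv1 ⟨h1, ha2⟩ h hc2
    exact absurd (hk3 ⟨ha2, h2.le⟩ hc1.le hd1) not_false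
  · -- a < x1, b ≤ x2 : contradiction
    have hy1c : y1 < c := by
      by_contra h; push_neg at h
      exact hk1 ⟨h1.le, hb1⟩ h hd1
    exact absurd (hv3 ⟨hb1, h2⟩ hy1c.le hc2) not_false
  · -- a < x1, x2 < b : horizontal edges cross
    have hy1c : y1 < c := by
      by_contra h; push_neg at h
      exact hk1 ⟨h1.le, hb1⟩ h hd1
    have hdy2 : d < y2 := by
      by_contra h; push_neg at h
      exact hk2 ⟨h1.le, hb1⟩ hc2 h
    exact Or.inr (Or.inl ⟨⟨hy1c.le, hc2, h1.le, h2.le⟩, ⟨hd1, hdy2.le, h1.le, h2.le⟩⟩)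
end
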